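/- Let S be a noetherian local ring and x₁, ..., x_d and y₁, ..., y_d two maximal S-regular sequences, with ideals I = (x₁,...,x_d) and J = (y₁,...,y_d). Given elements f₁, ..., f_d ∈ S such that x_i f_j − x_j f_i ∈ J for all i, j, there is a well-defined S-linear map η: I → S/J sending x_i to the class of −f_i. (Well-definedness uses that the only relations on a regular sequence are the Koszul relations.) -/

import Mathlib

open RingTheory.Sequence Finset in
/-- Key syzygy lemma: if `x` is a weakly regular sequence, `x i * f j - x j * f i ∈ J`
for all `i j`, and `∑ c i * x i = 0`, then `∑ c i * f i ∈ J`. -/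
lemma stmt17_key (S : Type*) [CommRing S] (J : Ideal S) :
    ∀ (d : ℕ) (x f : Fin d → S),
      IsWeaklyRegular S (List.ofFn x) →
      (∀ i j, x i * f j - x j * f i ∈ J) →
      ∀ c : Fin d → S, (∑ i, c i * x i) = 0 → (∑ i, c i * f i) ∈ J := by
  intro d
  induction d with
  | zero => intro x f _ _ c _; simp
  | succ n ih =>
    intro x f hreg hf c hc
    set x' : Fin n → S := fun i => x i.castSucc with hx'
    set f' : Fin n → S := fun i => f i.castSucc with hf'
    have hlist : List.ofFn x = List.ofFn x' ++ [x (Fin.last n)] := by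
      rw [List.ofFn_succ', List.concat_eq_append]
    rw [hlist, isWeaklyRegular_append_iff] at hreg
    obtain ⟨hreg', hlast⟩ := hreg
    rw [isWeaklyRegular_singleton_iff] at hlast
    -- `c (last) * x (last) ∈ I' := span of the first n elements`
    set I' : Ideal S := Ideal.ofList (List.ofFn x') with hI'
    have hIspan : I' = Ideal.span (Set.range x') := by
      rw [hI']; exact congrArg Ideal.span (Set.ext fun r => List.mem_ofFn)
    have hsum : (∑ i : Fin n, c i.castSucc * x' i) + c (Fin.last n) * x (Fin.last n) = 0 := by
      rw [← hc, Fin.sum_univ_castSucc]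
    have hmem : c (Fin.last n) * x (Fin.last n) ∈ I' := by
      have : c (Fin.last n) * x (Fin.last n) = -(∑ i : Fin n, c i.castSucc * x' i) :=
        eq_neg_of_add_eq_zero_right hsum
      rw [this, hIspan]
      exact neg_mem (Ideal.sum_mem _ fun i _ =>
        Ideal.mul_mem_left _ _ (Ideal.subset_span (Set.mem_range_self i)))
    -- regularity of x (last) mod I' gives c (last) ∈ I'
    have hclast : c (Fin.last n) ∈ I' := by
      have h0 : x (Fin.last n) • (Submodule.Quotient.mk (c (Fin.last n)) :
          S ⧸ (I' • ⊤ : Submodule S S)) = x (Fin.last n) • (0 : S ⧸ (I' • ⊤ : Submodule S S)) := by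
        rw [smul_zero, ← Submodule.Quotient.mk_smul, Submodule.Quotient.mk_eq_zero,
          Ideal.smul_eq_mul, Ideal.mul_top]
        simpa [smul_eq_mul, mul_comm] using hmem
      have := hlast h0
      rw [Submodule.Quotient.mk_eq_zero, Ideal.smul_eq_mul, Ideal.mul_top] at this
      exact this
    rw [hIspan, ← Ideal.submodule_span_eq, Submodule.mem_span_range_iff_exists_fun] at hclast
    obtain ⟨u, hu⟩ := hclast
    simp only [smul_eq_mul] at hu
    -- apply the induction hypothesis to c' = c ∘ castSucc + u * x(last)
    set c' : Fin n → S := fun i => c i.castSucc + u i * x (Fin.last n) with hc'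
    have hsum' : (∑ i, c' i * x' i) = 0 := by
      have : (∑ i, c' i * x' i)
          = (∑ i : Fin n, c i.castSucc * x' i) + (∑ i, u i * x' i) * x (Fin.last n) := by
        rw [Finset.sum_mul, ← Finset.sum_add_distrib]
        exact Finset.sum_congr rfl fun i _ => by ring
      rw [this, hu, hsum]
    have hmemJ : (∑ i, c' i * f' i) ∈ J :=
      ih x' f' hreg' (fun i j => hf i.castSucc j.castSucc) c' hsum'
    have hB : (∑ i, u i * (x (Fin.last n) * f i.castSucc - x i.castSucc * f (Fin.last n))) ∈ J :=
      Ideal.sum_mem _ fun i _ => Ideal.mul_mem_left _ _ (hf (Fin.last n) i.castSucc)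
    have key : (∑ i, c i * f i)
        = (∑ i, c' i * f' i)
          - (∑ i, u i * (x (Fin.last n) * f i.castSucc - x i.castSucc * f (Fin.last n))) := by
      rw [Fin.sum_univ_castSucc, ← Finset.sum_sub_distrib]
      have : ∀ i : Fin n, c' i * f' i
          - u i * (x (Fin.last n) * f i.castSucc - x i.castSucc * f (Fin.last n))
          = c i.castSucc * f i.castSucc + (u i * x' i) * f (Fin.last n) := by
        intro i; simp only [hc', hf', hx']; ring
      rw [Finset.sum_congr rfl fun i _ => this i, Finset.sum_add_distrib,
        ← Finset.sum_mul, hu]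
    rw [key]
    exact Ideal.sub_mem _ hmemJ hB

/-- Let `S` be a noetherian local ring and `x₁, …, x_d`, `y₁, …, y_d`
two maximal `S`-regular sequences, with `I = (x₁, …, x_d)` and `J = (y₁, …, y_d)`.
Given `f₁, …, f_d ∈ S` with `x_i f_j − x_j f_i ∈ J` for all `i, j`, there is a
well-defined `S`-linear map `η : I → S/J` sending `x_i` to the class of `−f_i`. -/
theorem stmt17 (S : Type*) [CommRing S] [IsNoetherianRing S] [IsLocalRing S]
    (d : ℕ) (x y : Fin d → S)
    (hx : RingTheory.Sequence.IsRegular S (List.ofFn x))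
    (hxmax : ∀ r : S, ¬ RingTheory.Sequence.IsRegular S (List.ofFn x ++ [r]))
    (hy : RingTheory.Sequence.IsRegular S (List.ofFn y))
    (hymax : ∀ r : S, ¬ RingTheory.Sequence.IsRegular S (List.ofFn y ++ [r]))
    (f : Fin d → S)
    (hf : ∀ i j, x i * f j - x j * f i ∈ Ideal.span (Set.range y)) :
    ∃ η : ↥(Ideal.span (Set.range x)) →ₗ[S] (S ⧸ Ideal.span (Set.range y)),
      ∀ i, η ⟨x i, Ideal.subset_span (Set.mem_range_self i)⟩ =
        Ideal.Quotient.mk (Ideal.span (Set.range y)) (-(f i)) := by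
  classical
  set J : Ideal S := Ideal.span (Set.range y) with hJ
  set φ : (Fin d → S) →ₗ[S] S := Fintype.linearCombination S x with hφ
  set ψ : (Fin d → S) →ₗ[S] S ⧸ J :=
    (J.mkQ.comp (Fintype.linearCombination S (fun i => -f i))) with hψ
  have hker : LinearMap.ker φ ≤ LinearMap.ker ψ := by
    intro c hc
    simp only [LinearMap.mem_ker, hφ, Fintype.linearCombination_apply, smul_eq_mul] at hc
    simp only [LinearMap.mem_ker, hψ, LinearMap.comp_apply,
      Fintype.linearCombination_apply, smul_eq_mul, Submodule.mkQ_apply,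
      Submodule.Quotient.mk_eq_zero]
    have : (∑ i, c i * -f i) = -(∑ i, c i * f i) := by
      rw [← Finset.sum_neg_distrib]; exact Finset.sum_congr rfl fun i _ => by ring
    rw [this]
    exact neg_mem (stmt17_key S J d x f hx.toIsWeaklyRegular hf c hc)
  have hrange : LinearMap.range φ = Ideal.span (Set.range x) := by
    rw [hφ, Fintype.range_linearCombination]
  -- factor ψ through the range of φ
  let e : ((Fin d → S) ⧸ LinearMap.ker φ) ≃ₗ[S] LinearMap.range φ := φ.quotKerEquivRange
  let lift : ((Fin d → S) ⧸ LinearMap.ker φ) →ₗ[S] S ⧸ J :=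
    Submodule.liftQ (LinearMap.ker φ) ψ hker
  let incl : ↥(Ideal.span (Set.range x)) →ₗ[S] ↥(LinearMap.range φ) :=
    Submodule.inclusion (le_of_eq hrange.symm)
  refine ⟨lift.comp (e.symm.toLinearMap.comp incl), fun i => ?_⟩
  have hxi : φ (Pi.single i 1) = x i := by
    simp [hφ, Fintype.linearCombination_apply, Pi.single_apply, Finset.sum_ite_eq']
  have h1 : incl ⟨x i, Ideal.subset_span (Set.mem_range_self i)⟩
      = ⟨φ (Pi.single i 1), LinearMap.mem_range_self _ _⟩ := by
    apply Subtype.ext; simp [incl, hxi]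
  have h2 : e.symm ⟨φ (Pi.single i 1), LinearMap.mem_range_self _ _⟩
      = Submodule.Quotient.mk (Pi.single i 1) := by
    have := φ.quotKerEquivRange_symm_apply_image (Pi.single i 1)
      (LinearMap.mem_range_self _ _)
    simpa [e] using this
  simp only [LinearMap.comp_apply, LinearEquiv.coe_coe, h1, h2]
  rw [show lift (Submodule.Quotient.mk (Pi.single i 1)) = ψ (Pi.single i 1) from
    Submodule.liftQ_apply _ _ _]
  simp [ψ, Fintype.linearCombination_apply, Pi.single_apply, Finset.sum_ite_eq',
    Ideal.Quotient.mk_eq_mk, Submodule.Quotient.mk]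
  rfl
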